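/- arXiv:1904.07322 — 2 statements merged into one kernel-verified Lean document; each statement's English description precedes it below -/
import Mathlib

section
/- Let (C, T, F) be a cotorsion torsion triple in an abelian category A. Then the functors c : A → C/(C ∩ T) and f : A → F restrict to mutually inverse equivalences between F and the additive quotient C/(C ∩ T). -/
open CategoryTheory Category Limits

attribute [local instance] CategoryTheory.Abelian.hasFiniteBiproducts
attribute [local instance] CategoryTheory.Limits.HasFiniteBiproducts.of_hasFiniteProducts

universe w v u

namespace Paper

variable {A : Type u} [Category.{v} A] [Abelian A]

/-- `IsSes i p` expresses that `0 ⟶ X ⟶ Y ⟶ Z ⟶ 0` is a short exact sequence. -/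
def IsSes {X Y Z : A} (i : X ⟶ Y) (p : Y ⟶ Z) : Prop :=
  ∃ w : i ≫ p = 0, (ShortComplex.mk i p w).ShortExact

/-- `Ext¹(X, Y) = 0`, phrased as: every extension of `X` by `Y` splits. -/
def Ext1Zero (X Y : A) : Prop :=
  ∀ ⦃E : A⦄ (i : Y ⟶ E) (p : E ⟶ X), IsSes i p → ∃ s : X ⟶ E, s ≫ p = 𝟙 X

/-- A torsion pair `(T, F)` of (strictly full) subcategories of an abelian category. -/
structure IsTorsionPair (T F : Set A) : Prop where
  isoClosed_torsion : ∀ {X Y : A}, (X ≅ Y) → X ∈ T → Y ∈ T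
  isoClosed_torsionFree : ∀ {X Y : A}, (X ≅ Y) → X ∈ F → Y ∈ F
  hom_zero : ∀ {X Y : A}, X ∈ T → Y ∈ F → ∀ f : X ⟶ Y, f = 0
  seq : ∀ X : A, ∃ (tX fX : A) (i : tX ⟶ X) (p : X ⟶ fX), tX ∈ T ∧ fX ∈ F ∧ IsSes i p

/-- A (complete) cotorsion pair `(C, D)` in an abelian category. -/
structure IsCotorsionPair (C D : Set A) : Prop where
  left_eq : C = {X : A | ∀ Y ∈ D, Ext1Zero X Y}
  right_eq : D = {Y : A | ∀ X ∈ C, Ext1Zero X Y}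
  seq₁ : ∀ X : A, ∃ (dX cX : A) (i : dX ⟶ cX) (p : cX ⟶ X), dX ∈ D ∧ cX ∈ C ∧ IsSes i p
  seq₂ : ∀ X : A, ∃ (dX cX : A) (i : X ⟶ dX) (p : dX ⟶ cX), dX ∈ D ∧ cX ∈ C ∧ IsSes i p

/-- `f` factors through some object belonging to the class `P`. -/
def FactorsThroughClass (P : Set A) {X Y : A} (f : X ⟶ Y) : Prop :=
  ∃ (Z : A) (_ : Z ∈ P) (a : X ⟶ Z) (b : Z ⟶ Y), a ≫ b = f

/-- The hom-relation on the full subcategory on `S` identifying two morphisms whose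
difference factors through an object of `P`. -/
def quotRel (S P : Set A) : HomRel (ObjectProperty.FullSubcategory (· ∈ S)) :=
  fun {X Y} f g =>
    FactorsThroughClass P (f.hom - g.hom)

/-- The additive quotient of the full subcategory on `S` by the morphisms factoring
through objects of `P`. -/
abbrev AddQuot (S P : Set A) := CategoryTheory.Quotient (quotRel S P)

/-- The subcategory of quotients of (finite direct sums of) objects of `T`. -/
def Fac (T : Set A) : Set A := {X : A | ∃ Y ∈ T, ∃ p : Y ⟶ X, Epi p}

/-- The right `Hom`-orthogonal `T^⊥`. -/
def rightHomPerp (T : Set A) : Set A := {X : A | ∀ Y ∈ T, ∀ f : Y ⟶ X, f = 0}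

/-- The left `Hom`-orthogonal `^⊥F`. -/
def leftHomPerp (F : Set A) : Set A := {X : A | ∀ Y ∈ F, ∀ f : X ⟶ Y, f = 0}

/-- The right `Ext¹`-orthogonal `T^{⊥₁}`. -/
def rightExt1Perp (T : Set A) : Set A := {X : A | ∀ Y ∈ T, Ext1Zero Y X}

/-- The left `Ext¹`-orthogonal `^{⊥₁}D`. -/
def leftExt1Perp (D : Set A) : Set A := {X : A | ∀ Y ∈ D, Ext1Zero X Y}

/-- `X` has projective dimension at most one: it has a length-one projective resolution. -/
def PdLeOne (X : A) : Prop :=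
  ∃ (P₁ P₀ : A) (i : P₁ ⟶ P₀) (p : P₀ ⟶ X), Projective P₁ ∧ Projective P₀ ∧ IsSes i p

/-- A weak tilting subcategory of an abelian category with enough projectives. -/
structure IsWeakTilting (T : Set A) : Prop where
  sum_mem : ∀ {X Y : A}, X ∈ T → Y ∈ T → (X ⊞ Y) ∈ T
  summand_mem : ∀ {X Y : A}, X ∈ T → (∃ (s : Y ⟶ X) (r : X ⟶ Y), s ≫ r = 𝟙 Y) → Y ∈ T
  ext1_zero : ∀ {X Y : A}, X ∈ T → Y ∈ T → Ext1Zero X Y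
  pd_le_one : ∀ X ∈ T, PdLeOne X
  coresolution : ∀ P : A, Projective P → ∃ (T₀ T₁ : A) (i : P ⟶ T₀) (p : T₀ ⟶ T₁),
    T₀ ∈ T ∧ T₁ ∈ T ∧ IsSes i p

/-- `φ : X ⟶ E` is a right `T`-approximation of `E`. -/
def IsRightApprox (T : Set A) {X E : A} (φ : X ⟶ E) : Prop :=
  X ∈ T ∧ ∀ X' ∈ T, ∀ f : X' ⟶ E, ∃ g : X' ⟶ X, g ≫ φ = f

/-- A tilting subcategory: a weak tilting subcategory that is contravariantly finite. -/
structure IsTilting (T : Set A) extends IsWeakTilting T : Prop where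
  contravariantly_finite : ∀ E : A, ∃ (X : A) (φ : X ⟶ E), IsRightApprox T φ


section Aux

variable {C T F : Set A}

lemma IsSes.epi {X Y Z : A} {i : X ⟶ Y} {p : Y ⟶ Z} (h : IsSes i p) : Epi p := by
  obtain ⟨w, hse⟩ := h; exact hse.epi_g

lemma IsSes.mono {X Y Z : A} {i : X ⟶ Y} {p : Y ⟶ Z} (h : IsSes i p) : Mono i := by
  obtain ⟨w, hse⟩ := h; exact hse.mono_f

/-- Factorization through the cokernel in a short exact sequence. -/
lemma IsSes.desc {X Y Z W : A} {i : X ⟶ Y} {p : Y ⟶ Z} (h : IsSes i p)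
    (g : Y ⟶ W) (hg : i ≫ g = 0) : ∃ d : Z ⟶ W, p ≫ d = g := by
  obtain ⟨w, hse⟩ := h
  haveI := hse.epi_g
  obtain ⟨d, hd⟩ := CokernelCofork.IsColimit.desc' hse.exact.gIsCokernel g hg
  exact ⟨d, hd⟩

/-- Factorization through the kernel in a short exact sequence. -/
lemma IsSes.liftKer {X Y Z W : A} {i : X ⟶ Y} {p : Y ⟶ Z} (h : IsSes i p)
    (g : W ⟶ Y) (hg : g ≫ p = 0) : ∃ l : W ⟶ X, l ≫ i = g := by
  obtain ⟨w, hse⟩ := h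
  haveI := hse.mono_f
  obtain ⟨l, hl⟩ := KernelFork.IsLimit.lift' hse.exact.fIsKernel g hg
  exact ⟨l, hl⟩

lemma memC_ext (hct : IsCotorsionPair C T) {X Y : A} (hX : X ∈ C) (hY : Y ∈ T) :
    Ext1Zero X Y := by
  rw [hct.left_eq] at hX; exact hX Y hY

/-- Lifting a morphism along the epimorphism in a short exact sequence whose kernel
has vanishing `Ext¹` against the source. -/
lemma lift_of_ses {K E Z X : A} {i : K ⟶ E} {p : E ⟶ Z} (h : IsSes i p)
    (hext : Ext1Zero X K) (g : X ⟶ Z) : ∃ l : X ⟶ E, l ≫ p = g := by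
  obtain ⟨w, hse⟩ := h
  haveI := hse.epi_g; haveI := hse.mono_f
  have hw : i ≫ p = 0 := w
  set k : K ⟶ pullback p g := pullback.lift i 0 (by rw [hw, zero_comp]) with hkdef
  have hkfst : k ≫ pullback.fst p g = i := pullback.lift_fst _ _ _
  have hk2 : k ≫ pullback.snd p g = 0 := pullback.lift_snd _ _ _
  haveI : Mono k := mono_of_mono_fac hkfst
  have lim : IsLimit (KernelFork.ofι k hk2) := by
    refine KernelFork.IsLimit.ofι' k hk2 (fun {W} h hh => ?_)
    have h0 : (h ≫ pullback.fst p g) ≫ p = 0 := by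
      rw [assoc, pullback.condition, ← assoc, hh, zero_comp]
    obtain ⟨m, hm⟩ := KernelFork.IsLimit.lift' hse.exact.fIsKernel (h ≫ pullback.fst p g) h0
    refine ⟨m, ?_⟩
    apply pullback.hom_ext
    · rw [assoc, hkfst]; exact hm
    · rw [assoc, hk2, comp_zero, hh]
  have hses2 : IsSes k (pullback.snd p g) :=
    ⟨hk2, { exact := ShortComplex.exact_of_f_is_kernel _ lim }⟩
  obtain ⟨s, hs⟩ := hext k (pullback.snd p g) hses2
  exact ⟨s ≫ pullback.fst p g, by
    rw [assoc, pullback.condition, ← assoc, hs, id_comp]⟩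

lemma mem_torsion_of_hom_zero (ht : IsTorsionPair T F) {B : A}
    (h : ∀ G ∈ F, ∀ f : B ⟶ G, f = 0) : B ∈ T := by
  obtain ⟨tB, fB, i, p, htB, hfB, hses⟩ := ht.seq B
  have hp : p = 0 := h fB hfB p
  obtain ⟨e, he⟩ := hses.liftKer (𝟙 B) (by rw [id_comp, hp])
  haveI : Mono i := hses.mono
  have hie : i ≫ e = 𝟙 tB := by
    rw [← cancel_mono i, assoc, he, comp_id, id_comp]
  exact ht.isoClosed_torsion ⟨i, e, hie, he⟩ htB

/-- The torsion class is closed under extensions. -/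
lemma mem_torsion_ext (ht : IsTorsionPair T F) {X Y Z : A} {i : X ⟶ Y} {p : Y ⟶ Z}
    (hses : IsSes i p) (hX : X ∈ T) (hZ : Z ∈ T) : Y ∈ T := by
  refine mem_torsion_of_hom_zero ht (fun G hG f => ?_)
  obtain ⟨d, hd⟩ := hses.desc f (ht.hom_zero hX hG _)
  rw [← hd, ht.hom_zero hZ hG d, comp_zero]

/-- A morphism from an object of `C` which is killed by an epimorphism with kernel
in `T` factors through an object in `C ∩ T`. -/
lemma factors_of_comp_zero (hct : IsCotorsionPair C T) (ht : IsTorsionPair T F)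
    {W K E Z : A} {i : K ⟶ E} {p : E ⟶ Z} (hses : IsSes i p) (hK : K ∈ T) (hW : W ∈ C)
    {h : W ⟶ E} (hh : h ≫ p = 0) : FactorsThroughClass (C ∩ T) h := by
  obtain ⟨u, hu⟩ := hses.liftKer h hh
  obtain ⟨d, c, j, q, hdT, hcC, hq⟩ := hct.seq₁ K
  have hcT : c ∈ T := mem_torsion_ext ht hq hdT hK
  obtain ⟨l, hl⟩ := lift_of_ses hq (memC_ext hct hW hdT) u
  exact ⟨c, ⟨hcC, hcT⟩, l, q ≫ i, by rw [← assoc, hl, hu]⟩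

end Aux

/-- For a cotorsion torsion triple `(C, T, F)` the functors `c` and
`f` restrict to mutually inverse equivalences between `F` and the additive quotient
`C/(C ∩ T)`: there are functors `Φ = c|_F` and `Ψ = f|_C` which are mutually inverse,
where `Φ X` is a special `C`-approximation of `X` (with kernel in `T`) and `Ψ Y` is
the torsion-free quotient of `Y` (with kernel in `T`). -/
theorem statement7 {C T F : Set A} (hct : IsCotorsionPair C T) (ht : IsTorsionPair T F) :
    ∃ (Φ : ObjectProperty.FullSubcategory (· ∈ F) ⥤ AddQuot C (C ∩ T))
      (Ψ : AddQuot C (C ∩ T) ⥤ ObjectProperty.FullSubcategory (· ∈ F)),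
      Nonempty (Φ ⋙ Ψ ≅ 𝟭 (ObjectProperty.FullSubcategory (· ∈ F))) ∧
      Nonempty (Ψ ⋙ Φ ≅ 𝟭 (AddQuot C (C ∩ T))) ∧
      (∀ X : ObjectProperty.FullSubcategory (· ∈ F),
        ∃ (dX : A) (_ : dX ∈ T) (i : dX ⟶ ((Φ.obj X).as).obj)
          (p : ((Φ.obj X).as).obj ⟶ X.obj), IsSes i p) ∧
      (∀ Y : AddQuot C (C ∩ T),
        ∃ (fY : A) (_ : fY ∈ T) (i : fY ⟶ (Y.as).obj)
          (p : (Y.as).obj ⟶ (Ψ.obj Y).obj), IsSes i p) := by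
  classical
  -- choose the special approximation sequences and the torsion sequences
  choose dO cO ci cp hdT hcC hcses using hct.seq₁
  choose tO fO ti tp htT hfF htses using ht.seq
  set r := quotRel C (C ∩ T) with hr
  set Q : ObjectProperty.FullSubcategory (· ∈ C) ⥤ AddQuot C (C ∩ T) := Quotient.functor r with hQ
  -- the functor `f` on morphisms
  have psi_ex : ∀ (Y Y' : A) (g : Y ⟶ Y'), ∃ h : fO Y ⟶ fO Y', tp Y ≫ h = g ≫ tp Y' :=
    fun Y Y' g => (htses Y).desc (g ≫ tp Y') (ht.hom_zero (htT Y) (hfF Y') _)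
  choose psi hpsi using psi_ex
  have psi_uniq : ∀ (Y Y' : A) (g : Y ⟶ Y') (h : fO Y ⟶ fO Y'),
      tp Y ≫ h = g ≫ tp Y' → h = psi Y Y' g := by
    intro Y Y' g h hyp
    haveI := (htses Y).epi
    exact (cancel_epi (tp Y)).mp (by rw [hyp, hpsi])
  -- the functor `c` on morphisms
  have phi_ex : ∀ (X X' : A) (f : X ⟶ X'), ∃ l : cO X ⟶ cO X', l ≫ cp X' = cp X ≫ f :=
    fun X X' f => lift_of_ses (hcses X') (memC_ext hct (hcC X) (hdT X')) (cp X ≫ f)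
  choose phi hphi using phi_ex
  -- key: two maps out of an object of `C` agreeing after an epi with torsion kernel
  -- are identified in the quotient
  have key : ∀ (W : A) (_ : W ∈ C) (K E Z : A) (i : K ⟶ E) (p : E ⟶ Z) (_ : IsSes i p)
      (_ : K ∈ T) (u v : W ⟶ E), u ≫ p = v ≫ p → FactorsThroughClass (C ∩ T) (u - v) := by
    intro W hW K E Z i p hses hK u v huv
    exact factors_of_comp_zero hct ht hses hK hW (by rw [Preadditive.sub_comp, huv, sub_self])
  -- the functor Φ
  let Φ : ObjectProperty.FullSubcategory (· ∈ F) ⥤ AddQuot C (C ∩ T) :=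
    { obj := fun X => Q.obj ⟨cO X.obj, hcC X.obj⟩
      map := fun {X X'} f => Q.map
        (show (⟨cO X.obj, hcC X.obj⟩ : ObjectProperty.FullSubcategory (· ∈ C)) ⟶ ⟨cO X'.obj, hcC X'.obj⟩
          from ObjectProperty.homMk (phi X.obj X'.obj f.hom))
      map_id := fun X => by
        have : (Quotient.functor r).map (ObjectProperty.homMk (X := ⟨cO X.obj, hcC X.obj⟩)
            (Y := ⟨cO X.obj, hcC X.obj⟩) (phi X.obj X.obj (𝟙 X.obj))) =
            (Quotient.functor r).map
              (𝟙 (show ObjectProperty.FullSubcategory (· ∈ C) from ⟨cO X.obj, hcC X.obj⟩)) := by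
          apply CategoryTheory.Quotient.sound r
          show FactorsThroughClass (C ∩ T) (phi X.obj X.obj (𝟙 X.obj) - 𝟙 (cO X.obj))
          exact key _ (hcC X.obj) _ _ _ (ci X.obj) (cp X.obj) (hcses X.obj) (hdT X.obj) _ _
            (by rw [hphi, comp_id, id_comp])
        simpa using this
      map_comp := fun {X X' X''} f g => by
        have : (Quotient.functor r).map (ObjectProperty.homMk (X := ⟨cO X.obj, hcC X.obj⟩)
            (Y := ⟨cO X''.obj, hcC X''.obj⟩) (phi X.obj X''.obj (f ≫ g).hom)) =
            (Quotient.functor r).map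
              ((show (⟨cO X.obj, hcC X.obj⟩ : ObjectProperty.FullSubcategory (· ∈ C)) ⟶ ⟨cO X'.obj, hcC X'.obj⟩
                from ObjectProperty.homMk (phi X.obj X'.obj f.hom)) ≫
               (show (⟨cO X'.obj, hcC X'.obj⟩ : ObjectProperty.FullSubcategory (· ∈ C)) ⟶ ⟨cO X''.obj, hcC X''.obj⟩
                from ObjectProperty.homMk (phi X'.obj X''.obj g.hom))) := by
          apply CategoryTheory.Quotient.sound r
          show FactorsThroughClass (C ∩ T)
            (phi X.obj X''.obj (f.hom ≫ g.hom) -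
              phi X.obj X'.obj f.hom ≫ phi X'.obj X''.obj g.hom)
          refine key _ (hcC X.obj) _ _ _ (ci X''.obj) (cp X''.obj) (hcses X''.obj)
            (hdT X''.obj) _ _ ?_
          show phi X.obj X''.obj (f.hom ≫ g.hom) ≫ cp X''.obj =
            (phi X.obj X'.obj f.hom ≫ phi X'.obj X''.obj g.hom) ≫ cp X''.obj
          have h2 : (phi X.obj X'.obj f.hom ≫ phi X'.obj X''.obj g.hom) ≫ cp X''.obj =
              cp X.obj ≫ f.hom ≫ g.hom := by
            rw [assoc, hphi, ← assoc, hphi, assoc]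
          rw [hphi, h2]
        simpa using this }
  -- the functor Ψ₀ on the full subcategory on C
  let Ψ₀ : ObjectProperty.FullSubcategory (· ∈ C) ⥤ ObjectProperty.FullSubcategory (· ∈ F) :=
    { obj := fun Y => ⟨fO Y.obj, hfF Y.obj⟩
      map := fun {Y Y'} g => ObjectProperty.homMk (psi Y.obj Y'.obj g.hom)
      map_id := fun Y => ObjectProperty.hom_ext (h :=
        (psi_uniq Y.obj Y.obj (𝟙 Y.obj) (𝟙 (fO Y.obj)) (by rw [comp_id, id_comp])).symm)
      map_comp := fun {Y Y' Y''} f g => ObjectProperty.hom_ext (h :=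
        (psi_uniq Y.obj Y''.obj (f.hom ≫ g.hom) (psi Y.obj Y'.obj f.hom ≫ psi Y'.obj Y''.obj g.hom)
          (by rw [← assoc, hpsi, assoc, hpsi, ← assoc])).symm) }
  have hdesc : ∀ (x y : ObjectProperty.FullSubcategory (· ∈ C)) (f g : x ⟶ y), r f g →
      Ψ₀.map f = Ψ₀.map g := by
    intro x y f g hfg
    obtain ⟨Z, ⟨hZC, hZT⟩, a, b, hab⟩ := hfg
    have hzero : (f.hom - g.hom) ≫ tp y.obj = 0 := by
      rw [← hab, assoc, ht.hom_zero hZT (hfF y.obj) (b ≫ tp y.obj), comp_zero]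
    rw [Preadditive.sub_comp] at hzero
    apply ObjectProperty.hom_ext
    show psi x.obj y.obj f.hom = psi x.obj y.obj g.hom
    refine psi_uniq x.obj y.obj g.hom (psi x.obj y.obj f.hom) ?_
    rw [hpsi]
    exact sub_eq_zero.mp hzero
  let Ψ : AddQuot C (C ∩ T) ⥤ ObjectProperty.FullSubcategory (· ∈ F) := CategoryTheory.Quotient.lift r Ψ₀ hdesc
  refine ⟨Φ, Ψ, ?_, ?_, ?_, ?_⟩
  · -- unit iso Φ ⋙ Ψ ≅ 𝟭
    have unit_ex : ∀ X : A, X ∈ F → ∃ (η : fO (cO X) ⟶ X) (θ : X ⟶ fO (cO X)),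
        tp (cO X) ≫ η = cp X ∧ cp X ≫ θ = tp (cO X) := by
      intro X hX
      obtain ⟨η, hη⟩ := (htses (cO X)).desc (cp X) (ht.hom_zero (htT (cO X)) hX _)
      obtain ⟨θ, hθ⟩ := (hcses X).desc (tp (cO X)) (ht.hom_zero (hdT X) (hfF (cO X)) _)
      exact ⟨η, θ, hη, hθ⟩
    choose eta theta heta htheta using unit_ex
    refine ⟨NatIso.ofComponents (fun X => ?_) ?_⟩
    · refine ⟨ObjectProperty.homMk (eta X.obj X.property),
        ObjectProperty.homMk (theta X.obj X.property), ?_, ?_⟩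
      · apply ObjectProperty.hom_ext
        show eta X.obj X.property ≫ theta X.obj X.property = 𝟙 (fO (cO X.obj))
        haveI := (htses (cO X.obj)).epi
        refine (cancel_epi (tp (cO X.obj))).mp ?_
        rw [← assoc, heta, htheta, comp_id]
      · apply ObjectProperty.hom_ext
        show theta X.obj X.property ≫ eta X.obj X.property = 𝟙 X.obj
        haveI := (hcses X.obj).epi
        refine (cancel_epi (cp X.obj)).mp ?_
        rw [← assoc, htheta, heta, comp_id]
    · intro X X' f
      apply ObjectProperty.hom_ext
      show psi (cO X.obj) (cO X'.obj) (phi X.obj X'.obj f.hom) ≫ eta X'.obj X'.property =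
        eta X.obj X.property ≫ f.hom
      haveI := (htses (cO X.obj)).epi
      refine (cancel_epi (tp (cO X.obj))).mp ?_
      have h2 : tp (cO X.obj) ≫ psi (cO X.obj) (cO X'.obj) (phi X.obj X'.obj f.hom) ≫
          eta X'.obj X'.property = cp X.obj ≫ f.hom := by
        rw [← assoc, hpsi, assoc, heta, hphi]
      rw [h2, ← assoc, heta]
  · -- counit iso Ψ ⋙ Φ ≅ 𝟭
    have counit_ex : ∀ B : A, B ∈ C → ∃ (u : cO (fO B) ⟶ B) (v : B ⟶ cO (fO B)),
        u ≫ tp B = cp (fO B) ∧ v ≫ cp (fO B) = tp B := by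
      intro B hB
      obtain ⟨u, hu⟩ := lift_of_ses (htses B) (memC_ext hct (hcC (fO B)) (htT B)) (cp (fO B))
      obtain ⟨v, hv⟩ := lift_of_ses (hcses (fO B)) (memC_ext hct hB (hdT (fO B))) (tp B)
      exact ⟨u, v, hu, hv⟩
    choose uu vv huu hvv using counit_ex
    refine ⟨NatIso.ofComponents (fun Y => ?_) ?_⟩
    · refine ⟨Q.map (show (⟨cO (fO Y.as.obj), hcC _⟩ : ObjectProperty.FullSubcategory (· ∈ C)) ⟶ Y.as
          from ObjectProperty.homMk (uu Y.as.obj Y.as.property)),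
        Q.map (show Y.as ⟶ (⟨cO (fO Y.as.obj), hcC _⟩ : ObjectProperty.FullSubcategory (· ∈ C))
          from ObjectProperty.homMk (vv Y.as.obj Y.as.property)), ?_, ?_⟩
      · rw [← Q.map_comp]
        show Q.map _ = Q.map (𝟙 (⟨cO (fO Y.as.obj), hcC _⟩ : ObjectProperty.FullSubcategory (· ∈ C)))
        apply CategoryTheory.Quotient.sound r
        show FactorsThroughClass (C ∩ T)
          (uu Y.as.obj Y.as.property ≫ vv Y.as.obj Y.as.property - 𝟙 (cO (fO Y.as.obj)))
        refine key _ (hcC (fO Y.as.obj)) _ _ _ (ci (fO Y.as.obj)) (cp (fO Y.as.obj))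
          (hcses (fO Y.as.obj)) (hdT (fO Y.as.obj)) _ _ ?_
        show (uu Y.as.obj Y.as.property ≫ vv Y.as.obj Y.as.property) ≫ cp (fO Y.as.obj) =
          𝟙 _ ≫ cp (fO Y.as.obj)
        rw [assoc, hvv, huu, id_comp]
      · rw [← Q.map_comp]
        show Q.map _ = Q.map (𝟙 Y.as)
        apply CategoryTheory.Quotient.sound r
        show FactorsThroughClass (C ∩ T)
          (vv Y.as.obj Y.as.property ≫ uu Y.as.obj Y.as.property - 𝟙 Y.as.obj)
        refine key _ Y.as.property _ _ _ (ti Y.as.obj) (tp Y.as.obj)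
          (htses Y.as.obj) (htT Y.as.obj) _ _ ?_
        show (vv Y.as.obj Y.as.property ≫ uu Y.as.obj Y.as.property) ≫ tp Y.as.obj =
          𝟙 _ ≫ tp Y.as.obj
        rw [assoc, huu, hvv, id_comp]
    · rintro ⟨Y⟩ ⟨Y'⟩ ⟨g⟩
      show Q.map _ ≫ Q.map _ = Q.map _ ≫ Q.map g
      rw [← Q.map_comp, ← Q.map_comp]
      apply CategoryTheory.Quotient.sound r
      show FactorsThroughClass (C ∩ T)
        (phi (fO Y.obj) (fO Y'.obj) (psi Y.obj Y'.obj g.hom) ≫ uu Y'.obj Y'.property -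
          uu Y.obj Y.property ≫ g.hom)
      refine key _ (hcC (fO Y.obj)) _ _ _ (ti Y'.obj) (tp Y'.obj)
        (htses Y'.obj) (htT Y'.obj) _ _ ?_
      show (phi (fO Y.obj) (fO Y'.obj) (psi Y.obj Y'.obj g.hom) ≫ uu Y'.obj Y'.property) ≫
          tp Y'.obj = (uu Y.obj Y.property ≫ g.hom) ≫ tp Y'.obj
      rw [assoc, huu, hphi, assoc, ← hpsi, ← assoc, huu]
  · intro X
    exact ⟨dO X.obj, hdT X.obj, ci X.obj, cp X.obj, hcses X.obj⟩
  · intro Y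
    exact ⟨tO Y.as.obj, htT Y.as.obj, ti Y.as.obj, tp Y.as.obj, htses Y.as.obj⟩

end Paper
end

section
/- Let A be an abelian category with enough projectives and T a weak tilting subcategory. Then Fac T = T⊥₁, i.e., the class of quotients of finite direct sums of objects of T equals the class of objects A with Ext¹(T, A) = 0 for all T ∈ T. -/
open CategoryTheory Category Limits

attribute [local instance] CategoryTheory.Abelian.hasFiniteBiproducts
attribute [local instance] CategoryTheory.Limits.HasFiniteBiproducts.of_hasFiniteProducts

universe w v u

namespace Paper

variable {A : Type u} [Category.{v} A] [Abelian A]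

/-- Pushing out a short exact sequence `0 ⟶ A₁ ⟶ B ⟶ C ⟶ 0` along `f : A₁ ⟶ Y`
gives a short exact sequence `0 ⟶ Y ⟶ pushout f i ⟶ C ⟶ 0`. -/
lemma isSes_pushout {A₁ B C Y : A} {i : A₁ ⟶ B} {p : B ⟶ C} {w : i ≫ p = 0}
    (hS : (ShortComplex.mk i p w).ShortExact) (f : A₁ ⟶ Y) :
    IsSes (pushout.inl f i) (pushout.desc (0 : Y ⟶ C) p (by rw [w, comp_zero])) := by
  haveI : Mono i := hS.mono_f
  haveI : Epi p := hS.epi_g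
  refine ⟨pushout.inl_desc _ _ _, ?_⟩
  haveI hmono : Mono (pushout.inl f i) := inferInstance
  haveI hepi : Epi (pushout.desc (0 : Y ⟶ C) p
      (show f ≫ (0 : Y ⟶ C) = i ≫ p by rw [w, comp_zero])) :=
    epi_of_epi_fac (pushout.inr_desc _ _ _)
  refine { exact := ?_, mono_f := hmono, epi_g := hepi }
  rw [ShortComplex.exact_iff_exact_up_to_refinements]
  intro R x₂ hx₂
  dsimp at x₂ hx₂ ⊢
  set π_big : Y ⊞ B ⟶ pushout f i := biprod.desc (pushout.inl f i) (pushout.inr f i) with hπ_big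
  have hπepi : Epi π_big := by
    constructor
    intro Z u v h
    apply pushout.hom_ext
    · simpa [π_big] using biprod.inl ≫= h
    · simpa [π_big] using biprod.inr ≫= h
  obtain ⟨R₁, π₁, hπ₁, w₁, hw₁⟩ := surjective_up_to_refinements_of_epi π_big x₂
  have hcomp : π_big ≫ pushout.desc (0 : Y ⟶ C) p (by rw [w, comp_zero]) =
      biprod.snd ≫ p := by
    apply biprod.hom_ext'
    · simp [π_big]; exact pushout.inl_desc _ _ _
    · simp [π_big]; exact pushout.inr_desc _ _ _
  have h1 : (w₁ ≫ biprod.snd) ≫ p = 0 := by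
    have := hw₁ =≫ pushout.desc (0 : Y ⟶ C) p (by rw [w, comp_zero])
    rw [assoc, hx₂, comp_zero, assoc, hcomp] at this
    rw [assoc]
    exact this.symm
  obtain ⟨R₂, π₂, hπ₂, a, ha⟩ := hS.exact.exact_up_to_refinements (w₁ ≫ biprod.snd) h1
  dsimp at a ha
  have expand : π_big = biprod.fst ≫ pushout.inl f i + biprod.snd ≫ pushout.inr f i := by
    apply biprod.hom_ext' <;> simp [π_big]
  refine ⟨R₂, π₂ ≫ π₁, epi_comp _ _, π₂ ≫ w₁ ≫ biprod.fst + a ≫ f, ?_⟩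
  have hu : π₂ ≫ w₁ ≫ biprod.snd = a ≫ i := by rw [← assoc] at ha ⊢; exact ha
  calc (π₂ ≫ π₁) ≫ x₂ = π₂ ≫ π₁ ≫ x₂ := by rw [assoc]
    _ = π₂ ≫ w₁ ≫ π_big := by rw [hw₁]
    _ = π₂ ≫ w₁ ≫ (biprod.fst ≫ pushout.inl f i + biprod.snd ≫ pushout.inr f i) := by
        rw [← expand]
    _ = (π₂ ≫ w₁ ≫ biprod.fst) ≫ pushout.inl f i
        + (π₂ ≫ w₁ ≫ biprod.snd) ≫ pushout.inr f i := by
        simp [Preadditive.comp_add, assoc]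
    _ = (π₂ ≫ w₁ ≫ biprod.fst + a ≫ f) ≫ pushout.inl f i := by
        rw [hu, Preadditive.add_comp]
        congr 1
        rw [assoc, ← pushout.condition, ← assoc]

/-- For a weak tilting subcategory `T` of an abelian category with
enough projectives, `Fac T = T^{⊥₁}`. -/
theorem statement10 [EnoughProjectives A] {T : Set A} (hT : IsWeakTilting T) :
    Fac T = rightExt1Perp T := by
  ext X
  constructor
  · -- Fac T ⊆ T^{⊥₁}
    rintro ⟨Y, hY, q, hq⟩ T' hT' E iX pE ⟨wE, hE⟩
    obtain ⟨P₁, P₀, i, π, hP₁, hP₀, wπ, hπ⟩ := hT.pd_le_one T' hT'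
    haveI := hP₁; haveI := hP₀
    haveI : Epi pE := hE.epi_g
    haveI : Mono iX := hE.mono_f
    haveI : Epi π := hπ.epi_g
    haveI : Mono i := hπ.mono_f
    haveI : Epi q := hq
    set a : P₀ ⟶ E := Projective.factorThru π pE with ha
    have hb0 : (i ≫ a) ≫ pE = 0 := by
      rw [assoc, ha, Projective.factorThru_comp, wπ]
    set b : P₁ ⟶ X := hE.exact.lift (i ≫ a) hb0 with hbdef
    have hb : b ≫ iX = i ≫ a := hE.exact.lift_f _ _
    set c : P₁ ⟶ Y := Projective.factorThru b q with hc
    have hcq : c ≫ q = b := Projective.factorThru_comp _ _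
    have ses' := isSes_pushout hπ c
    obtain ⟨s, hs⟩ := hT.ext1_zero hT' hY _ _ ses'
    have hdesc : c ≫ q ≫ iX = i ≫ a := by rw [← assoc, hcq, hb]
    set u : pushout c i ⟶ E := pushout.desc (q ≫ iX) a hdesc with hu
    have hup : u ≫ pE = pushout.desc (0 : Y ⟶ T') π (by rw [wπ, comp_zero]) := by
      apply pushout.hom_ext
      · rw [← assoc, hu, pushout.inl_desc, assoc, wE, comp_zero, pushout.inl_desc]
      · rw [← assoc, hu, pushout.inr_desc, pushout.inr_desc, ha,
          Projective.factorThru_comp]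
    exact ⟨s ≫ u, by rw [assoc, hup, hs]⟩
  · -- T^{⊥₁} ⊆ Fac T
    intro hX
    obtain ⟨T₀, T₁, i, p, hT₀, hT₁, wp, hp⟩ :=
      hT.coresolution (Projective.over X) inferInstance
    haveI : Mono i := hp.mono_f
    haveI : Epi p := hp.epi_g
    have ses' := isSes_pushout hp (Projective.π X)
    obtain ⟨s, hs⟩ := hX T₁ hT₁ _ _ ses'
    obtain ⟨w', hse⟩ := ses'
    haveI : Mono (pushout.inl (Projective.π X) i) := hse.mono_f
    set g' : pushout (Projective.π X) i ⟶ T₁ := pushout.desc (0 : X ⟶ T₁) p (by rw [wp, comp_zero]) with hg'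
    have he : (𝟙 (pushout (Projective.π X) i) - g' ≫ s) ≫ g' = 0 := by
      rw [Preadditive.sub_comp, id_comp, assoc, hs, comp_id, sub_self]
    set r := hse.exact.lift (𝟙 (pushout (Projective.π X) i) - g' ≫ s) he with hrdef
    have hr : r ≫ pushout.inl (Projective.π X) i
        = 𝟙 (pushout (Projective.π X) i) - g' ≫ s := hse.exact.lift_f _ _
    have hretr : pushout.inl (Projective.π X) i ≫ r = 𝟙 X := by
      have h2 : (pushout.inl (Projective.π X) i ≫ r) ≫ pushout.inl (Projective.π X) i
          = 𝟙 X ≫ pushout.inl (Projective.π X) i := by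
        rw [assoc, hr, Preadditive.comp_sub, comp_id, id_comp, hg',
          ← assoc, pushout.inl_desc]
        simp
      exact (cancel_mono _).1 h2
    haveI : Epi r := epi_of_epi_fac hretr
    exact ⟨T₀, hT₀, pushout.inr (Projective.π X) i ≫ r, epi_comp _ _⟩

end Paper
end
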